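/- For the canonical contraction Δ²_M : TM ×_M ∧²T*M → T*M, (v,α) ↦ i_v α, which in coordinates is Δ²_M = p_{μν} ẋ^μ dx^ν, one has d_T^2 Δ²_M = −p_{μν} y^{μν} − ẋ^ν y^μ_{μν} = −(1/2) p_{μν}(y^{μν} − y^{νμ}) − ẋ^ν y^μ_{μν}. -/

import Mathlib

noncomputable section

/-- Coordinate model of vectors: functions on an index set. -/
abbrev Vec (ι : Type) := ι → ℝ

/-- Coordinate model of bivectors on `Vec ι`: (antisymmetric) matrices. -/
abbrev Biv (ι : Type) := ι → ι → ℝ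

/-- Antisymmetry of a bivector matrix. -/
def IsAnti {ι : Type} (u : Biv ι) : Prop := ∀ a b, u a b = - u b a

/-- Raw coordinate model of the exterior derivative of a `k`-form
(given as a function of a point and `k` tangent vectors). -/
def Dext {A : Type} [NormedAddCommGroup A] [NormedSpace ℝ A] {k : ℕ}
    (φ : A → (Fin k → A) → ℝ) : A → (Fin (k+1) → A) → ℝ :=
  fun x w => ∑ i : Fin (k+1), (-1 : ℝ)^(i : ℕ) *
    fderiv ℝ (fun y => φ y (fun j => w (i.succAbove j))) x (w i)

/-- Pull-back of a raw `k`-form along a map. -/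
def pullF {A B : Type} [NormedAddCommGroup A] [NormedSpace ℝ A]
    [NormedAddCommGroup B] [NormedSpace ℝ B] {k : ℕ}
    (f : A → B) (φ : B → (Fin k → B) → ℝ) : A → (Fin k → A) → ℝ :=
  fun x w => φ (f x) (fun i => fderiv ℝ f x (w i))

/-- The operator `i_T^2`: insertion of the bivector into the first two slots of a
`(k+2)`-form on the base, producing a semi-basic `k`-form on `∧²TN`
(modelled on `Vec ι × Biv ι`; only the base components of the arguments are used,
reflecting semi-basicity). -/
def iT2 {ι : Type} [Fintype ι] [DecidableEq ι] {k : ℕ}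
    (φ : Vec ι → (Fin (k+2) → Vec ι) → ℝ) :
    (Vec ι × Biv ι) → (Fin k → Vec ι × Biv ι) → ℝ :=
  fun p w => (1/2 : ℝ) * ∑ a, ∑ b, p.2 a b *
    φ p.1 (Matrix.vecCons (Pi.single a 1)
      (Matrix.vecCons (Pi.single b 1) (fun i => (w i).1)))

/-- The operator `d_T^2 = d ∘ i_T^2 − i_T^2 ∘ d` on `(k+2)`-forms, `k ≥ 0`. -/
def dT2 {ι : Type} [Fintype ι] [DecidableEq ι] {k : ℕ}
    (φ : Vec ι → (Fin (k+2) → Vec ι) → ℝ) :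
    (Vec ι × Biv ι) → (Fin (k+1) → Vec ι × Biv ι) → ℝ :=
  fun p w => Dext (iT2 φ) p w - iT2 (Dext φ) p w

/-- `i_T^2` on 1-forms lands in `(−1)`-forms, i.e. is zero. -/
def iT2one {ι : Type} (_φ : Vec ι → (Fin 1 → Vec ι) → ℝ) :
    (Vec ι × Biv ι) → ℝ := fun _ => 0

/-- `d_T^2` on 1-forms: `d ∘ i_T^2 − i_T^2 ∘ d = − i_T^2 ∘ d`. -/
def dT2one {ι : Type} [Fintype ι] [DecidableEq ι]
    (φ : Vec ι → (Fin 1 → Vec ι) → ℝ) : (Vec ι × Biv ι) → ℝ :=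
  fun p => - iT2 (Dext φ) p (fun i => i.elim0)

end

/-!
STATEMENT 5: For the canonical contraction `Δ²_M : TM ×_M ∧²T*M → T*M`, `(v,α) ↦ i_v α`,
which in coordinates is `Δ²_M = p_{μν} ẋ^μ dx^ν`, one has
`d_T^2 Δ²_M = −p_{μν} y^{μν} − ẋ^ν y^μ_{μν} = −(1/2) p_{μν}(y^{μν} − y^{νμ}) − ẋ^ν y^μ_{μν}`.

Coordinate model: the manifold `TM ×_M ∧²T*M` has coordinates `x^μ` (`ι`), `ẋ^ν` (`ι`),
`p_{μν}` (`ι × ι`, antisymmetric), indexed by `ι ⊕ (ι ⊕ ι × ι)`;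
`y^{μν} = u (inl μ) (inr (inl ν))` and `y^μ_{νλ} = u (inl μ) (inr (inr (ν,λ)))`.
-/


lemma fderiv_apply_expr {ι κ : Type} [Fintype ι] [Fintype κ]
    (A : ι → ι → κ) (B : ι → κ) (c : ι → ℝ) (b h : Vec κ) :
    fderiv ℝ (fun y : Vec κ => ∑ ν, (∑ μ, y (A μ ν) * y (B μ)) * c ν) b h
      = ∑ ν, (∑ μ, (h (A μ ν) * b (B μ) + b (A μ ν) * h (B μ))) * c ν := by
  have H : HasFDerivAt (fun y : Vec κ => ∑ ν, (∑ μ, y (A μ ν) * y (B μ)) * c ν)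
      (∑ ν : ι, (c ν) •
        (∑ μ : ι, (b (A μ ν) • (ContinuousLinearMap.proj (B μ) : Vec κ →L[ℝ] ℝ)
          + b (B μ) • (ContinuousLinearMap.proj (A μ ν) : Vec κ →L[ℝ] ℝ)))) b := by
    apply HasFDerivAt.fun_sum
    intro ν _
    apply HasFDerivAt.mul_const
    apply HasFDerivAt.fun_sum
    intro μ _
    exact ((ContinuousLinearMap.proj (A μ ν) : Vec κ →L[ℝ] ℝ).hasFDerivAt).mul
      ((ContinuousLinearMap.proj (B μ) : Vec κ →L[ℝ] ℝ).hasFDerivAt)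
  rw [H.fderiv]
  simp [ContinuousLinearMap.sum_apply, mul_comm, add_comm]

theorem dT2_Delta2_coordinates {ι : Type} [Fintype ι] [DecidableEq ι]
    (Δ : Vec (ι ⊕ (ι ⊕ ι × ι)) → (Fin 1 → Vec (ι ⊕ (ι ⊕ ι × ι))) → ℝ)
    (hΔ : Δ = fun b w => ∑ ν, (∑ μ, b (Sum.inr (Sum.inr (μ, ν))) * b (Sum.inr (Sum.inl μ)))
        * w 0 (Sum.inl ν))
    (b : Vec (ι ⊕ (ι ⊕ ι × ι)))
    (hb : ∀ μ ν, b (Sum.inr (Sum.inr (μ, ν))) = - b (Sum.inr (Sum.inr (ν, μ))))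
    (u : Biv (ι ⊕ (ι ⊕ ι × ι))) (hu : IsAnti u)
    (hup : ∀ i μ ν, u i (Sum.inr (Sum.inr (μ, ν))) = - u i (Sum.inr (Sum.inr (ν, μ)))) :
    dT2one Δ (b, u) =
      - (∑ μ, ∑ ν, b (Sum.inr (Sum.inr (μ, ν))) * u (Sum.inl μ) (Sum.inr (Sum.inl ν)))
      - (∑ ν, b (Sum.inr (Sum.inl ν)) * ∑ μ, u (Sum.inl μ) (Sum.inr (Sum.inr (μ, ν)))) ∧
    dT2one Δ (b, u) =
      - (1/2 : ℝ) * (∑ μ, ∑ ν, b (Sum.inr (Sum.inr (μ, ν))) *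
          (u (Sum.inl μ) (Sum.inr (Sum.inl ν)) - u (Sum.inl ν) (Sum.inr (Sum.inl μ))))
      - (∑ ν, b (Sum.inr (Sum.inl ν)) * ∑ μ, u (Sum.inl μ) (Sum.inr (Sum.inr (μ, ν)))) := by
  subst hΔ
  have key : ∀ v h : Vec (ι ⊕ (ι ⊕ ι × ι)),
      fderiv ℝ (fun y : Vec (ι ⊕ (ι ⊕ ι × ι)) =>
        ∑ ν, (∑ μ, y (Sum.inr (Sum.inr (μ, ν))) * y (Sum.inr (Sum.inl μ))) * v (Sum.inl ν)) b h
      = ∑ ν, (∑ μ, (h (Sum.inr (Sum.inr (μ, ν))) * b (Sum.inr (Sum.inl μ))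
          + b (Sum.inr (Sum.inr (μ, ν))) * h (Sum.inr (Sum.inl μ)))) * v (Sum.inl ν) :=
    fun v h => fderiv_apply_expr (fun μ ν => Sum.inr (Sum.inr (μ, ν)))
      (fun μ => Sum.inr (Sum.inl μ)) (fun ν => v (Sum.inl ν)) b h
  have h10 : (1 : Fin (0+1+1)).succAbove 0 = 0 := rfl
  have main : dT2one (fun b w => ∑ ν, (∑ μ, b (Sum.inr (Sum.inr (μ, ν))) * b (Sum.inr (Sum.inl μ)))
        * w 0 (Sum.inl ν)) (b, u) =
      - (∑ μ, ∑ ν, b (Sum.inr (Sum.inr (μ, ν))) * u (Sum.inl μ) (Sum.inr (Sum.inl ν)))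
      - (∑ ν, b (Sum.inr (Sum.inl ν)) * ∑ μ, u (Sum.inl μ) (Sum.inr (Sum.inr (μ, ν)))) := by
    simp only [h10, dT2one, iT2, Dext, Fin.sum_univ_succ, Fin.sum_univ_zero, Fin.isValue,
      pow_zero, pow_one, one_mul, neg_mul, Fin.val_zero, Fin.val_one, Fin.zero_succAbove,
      Fin.succ_zero_eq_one, Fin.succAbove_last, Fin.castSucc_zero, Matrix.cons_val_zero,
      Matrix.cons_val_one, Matrix.head_cons, key]
    simp only [Fintype.sum_sum_type, Fintype.sum_prod_type, Pi.single_apply, Sum.inl.injEq,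
      Sum.inr.injEq, Prod.mk.injEq, reduceCtorEq, mul_ite, ite_mul, if_true, if_false, mul_one,
      one_mul, mul_zero, zero_mul, ite_and, Finset.sum_ite_eq, Finset.sum_ite_eq',
      Finset.sum_const_zero, add_zero, zero_add, Finset.mem_univ, if_pos, Finset.mul_sum,
      Finset.sum_mul, mul_add, add_mul, neg_add_rev, mul_neg, neg_mul,
      Finset.sum_neg_distrib, Finset.sum_add_distrib]
    have hA : (∑ x : ι, ∑ i : ι, 1 / 2 * (u (Sum.inl x) (Sum.inr (Sum.inl i)) * b (Sum.inr (Sum.inr (i, x)))))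
        = ∑ x : ι, ∑ i : ι, -(1/2) * (b (Sum.inr (Sum.inr (x, i))) * u (Sum.inl x) (Sum.inr (Sum.inl i))) :=
      Finset.sum_congr rfl fun x _ => Finset.sum_congr rfl fun i _ => by rw [hb i x]; ring
    have hC : (∑ x : ι, ∑ i : ι, 1 / 2 * (u (Sum.inr (Sum.inl x)) (Sum.inl i) * b (Sum.inr (Sum.inr (x, i)))))
        = ∑ x : ι, ∑ i : ι, (1/2) * (b (Sum.inr (Sum.inr (x, i))) * u (Sum.inl x) (Sum.inr (Sum.inl i))) := by
      rw [Finset.sum_comm]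
      refine Finset.sum_congr rfl fun x _ => Finset.sum_congr rfl fun i _ => ?_
      rw [hu (Sum.inr (Sum.inl i)) (Sum.inl x), hb i x]; ring
    have hB : (∑ x : ι, ∑ i : ι, 1 / 2 * (u (Sum.inl x) (Sum.inr (Sum.inr (i, x))) * b (Sum.inr (Sum.inl i))))
        = ∑ x : ι, ∑ i : ι, -(1/2) * (b (Sum.inr (Sum.inl x)) * u (Sum.inl i) (Sum.inr (Sum.inr (i, x)))) := by
      rw [Finset.sum_comm]
      refine Finset.sum_congr rfl fun x _ => Finset.sum_congr rfl fun i _ => ?_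
      rw [hup (Sum.inl i) x i]; ring
    have hD : (∑ x : ι, ∑ i : ι, 1 / 2 * (u (Sum.inr (Sum.inr (x, i))) (Sum.inl i) * b (Sum.inr (Sum.inl x))))
        = ∑ x : ι, ∑ i : ι, (1/2) * (b (Sum.inr (Sum.inl x)) * u (Sum.inl i) (Sum.inr (Sum.inr (i, x)))) :=
      Finset.sum_congr rfl fun x _ => Finset.sum_congr rfl fun i _ => by
        rw [hu (Sum.inr (Sum.inr (x, i))) (Sum.inl i), hup (Sum.inl i) x i]; ring
    rw [hA, hB, hC, hD]
    simp only [Finset.mul_sum, Finset.sum_neg_distrib, neg_mul, ← Finset.sum_add_distrib,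
      ← Finset.sum_sub_distrib, neg_neg, zero_add, neg_zero]
    simp only [← Finset.mul_sum]
    linarith
  refine ⟨main, ?_⟩
  rw [main]
  have hswap : (∑ μ : ι, ∑ ν : ι, b (Sum.inr (Sum.inr (μ, ν))) * u (Sum.inl ν) (Sum.inr (Sum.inl μ)))
      = -∑ μ : ι, ∑ ν : ι, b (Sum.inr (Sum.inr (μ, ν))) * u (Sum.inl μ) (Sum.inr (Sum.inl ν)) := by
    rw [Finset.sum_comm, ← Finset.sum_neg_distrib]
    refine Finset.sum_congr rfl fun x _ => ?_
    rw [← Finset.sum_neg_distrib]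
    refine Finset.sum_congr rfl fun i _ => ?_
    rw [hb x i]; ring
  have hexp : (∑ μ : ι, ∑ ν : ι, b (Sum.inr (Sum.inr (μ, ν))) *
        (u (Sum.inl μ) (Sum.inr (Sum.inl ν)) - u (Sum.inl ν) (Sum.inr (Sum.inl μ))))
      = (∑ μ : ι, ∑ ν : ι, b (Sum.inr (Sum.inr (μ, ν))) * u (Sum.inl μ) (Sum.inr (Sum.inl ν)))
        - (∑ μ : ι, ∑ ν : ι, b (Sum.inr (Sum.inr (μ, ν))) * u (Sum.inl ν) (Sum.inr (Sum.inl μ))) := by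
    rw [← Finset.sum_sub_distrib]
    refine Finset.sum_congr rfl fun x _ => ?_
    rw [← Finset.sum_sub_distrib]
    refine Finset.sum_congr rfl fun i _ => ?_
    ring
  rw [hexp, hswap]
  ring
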